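/- Let B be a basic finite-dimensional k-algebra and suppose Hom_A(Q, Θ) ≅ Hom_A(Θ, Θ) = B as left B-modules, where Q = ⊕_{λ∈Λ} Q_λ with each Q_λ indecomposable-covering Θ_λ (there is a surjection Q_λ → Θ_λ), Θ = ⊕_{λ∈Λ} Θ_λ with the Θ_λ pairwise non-isomorphic indecomposables, and Λ finite. Then Hom_A(Q_λ, Θ) ≅ Hom_A(Θ_λ, Θ) as B-modules for every λ ∈ Λ. -/

import Mathlib

/-- A nonzero module with no nontrivial direct sum decomposition. -/
def IsIndecomp (A : Type) [Ring A] (X : Type) [AddCommGroup X] [Module A X] : Prop :=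
  (⊥ : Submodule A X) ≠ ⊤ ∧
  ∀ U V : Submodule A X, IsCompl U V → U = ⊥ ∨ V = ⊥

namespace KSp

open Function LinearMap

/-- Locality: a sum of two elements being a unit forces one to be a unit. -/
def Loc (R : Type) [Ring R] : Prop := ∀ a b : R, IsUnit (a + b) → IsUnit a ∨ IsUnit b

variable {R : Type} [Ring R]

theorem fitting_nilpotent {X : Type} [AddCommGroup X] [Module R X]
    [IsArtinian R X] [IsNoetherian R X] (hX : IsIndecomp R X)
    (f : Module.End R X) (hf : ¬ IsUnit f) : IsNilpotent f := by
  obtain ⟨n, hn⟩ := Filter.eventually_atTop.mp f.eventually_isCompl_ker_pow_range_pow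
  have hc := hn (max n 1) (le_max_left _ _)
  rcases hX.2 _ _ hc with h | h
  · exfalso
    apply hf
    rw [Module.End.isUnit_iff]
    have hinj : Function.Injective (f ^ max n 1) := by
      rw [← LinearMap.ker_eq_bot, h]
    have hfi : Function.Injective f := by
      have h1 : f ^ max n 1 = f ^ (max n 1 - 1) * f := by
        rw [← pow_succ]
        congr 1
        omega
      intro x y hxy
      apply hinj
      rw [h1]
      rw [Module.End.mul_apply, Module.End.mul_apply, hxy]
    exact IsArtinian.bijective_of_injective_endomorphism f hfi
  · exact ⟨max n 1, by rwa [← LinearMap.range_eq_bot]⟩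

theorem loc_end_of_indecomp {X : Type} [AddCommGroup X] [Module R X]
    [IsArtinian R X] [IsNoetherian R X] (hX : IsIndecomp R X) :
    Loc (Module.End R X) := by
  intro a b h
  by_cases ha : IsUnit a
  · exact Or.inl ha
  right
  set v := h.unit
  have ha' : ¬ IsUnit ((↑v⁻¹ : Module.End R X) * a) := by
    intro hu
    exact ha <| by
      have : a = (v : Module.End R X) * ((↑v⁻¹ : Module.End R X) * a) := by
        rw [← mul_assoc, v.mul_inv, one_mul]
      rw [this]
      exact (Units.isUnit v).mul hu
  have hnil := fitting_nilpotent hX _ ha'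
  have hv : (v : Module.End R X) = a + b := h.unit_spec
  have h1 : (1 : Module.End R X) - (↑v⁻¹ : Module.End R X) * a
      = (↑v⁻¹ : Module.End R X) * b := by
    have h2 : ((↑v⁻¹ : Module.End R X)) * (a + b) = 1 := by rw [← hv, v.inv_mul]
    rw [mul_add] at h2
    exact (eq_sub_of_add_eq' h2).symm
  have := hnil.isUnit_one_sub
  rw [h1] at this
  have : IsUnit ((v : Module.End R X) * ((↑v⁻¹ : Module.End R X) * b)) :=
    (Units.isUnit v).mul this
  rwa [← mul_assoc, v.mul_inv, one_mul] at this

/-- A unit in a "local" ring appearing as a finite sum has a unit summand. -/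
theorem isUnit_of_sum {ι : Type} (hloc : Loc R) (h0 : ¬ IsUnit (0 : R))
    (s : Finset ι) (f : ι → R) (h : IsUnit (∑ i ∈ s, f i)) : ∃ i ∈ s, IsUnit (f i) := by
  classical
  induction s using Finset.induction_on with
  | empty => rw [Finset.sum_empty] at h; exact absurd h h0
  | insert a t hx ih =>
    rw [Finset.sum_insert hx] at h
    rcases hloc _ _ h with h' | h'
    · exact ⟨a, Finset.mem_insert_self _ _, h'⟩
    · obtain ⟨i, hi, hu⟩ := ih h'
      exact ⟨i, Finset.mem_insert_of_mem hi, hu⟩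


section Tools

variable {M P N X₁ X₂ Z W : Type} [AddCommGroup M] [Module R M] [AddCommGroup P] [Module R P]
  [AddCommGroup N] [Module R N] [AddCommGroup X₁] [Module R X₁] [AddCommGroup X₂] [Module R X₂]
  [AddCommGroup Z] [Module R Z] [AddCommGroup W] [Module R W]

/-- A module with a retraction splits. -/
noncomputable def splitEquiv (a : P →ₗ[R] M) (b : M →ₗ[R] P) (hba : b ∘ₗ a = LinearMap.id) :
    M ≃ₗ[R] P × (LinearMap.ker b) where
  toFun m := (b m, ⟨m - a (b m), by
    have hk : b (a (b m)) = b m := by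
      have := LinearMap.congr_fun hba (b m); simpa using this
    simp [LinearMap.mem_ker, map_sub, hk]⟩)
  invFun p := a p.1 + p.2.1
  map_add' x y := by ext <;> simp <;> abel
  map_smul' r x := by ext <;> simp [smul_sub]
  left_inv m := by simp
  right_inv p := by
    have hb : b (a p.1) = p.1 := by
      have := LinearMap.congr_fun hba p.1; simpa using this
    have h2 : b p.2.1 = 0 := p.2.2
    ext
    · simp [hb, h2]
    · simp [hb, h2]

/-- Pi over `Option β`. -/
def piOption {β : Type} (N : Option β → Type) [∀ b, AddCommGroup (N b)]
    [∀ b, Module R (N b)] :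
    (∀ j, N j) ≃ₗ[R] N none × (∀ b : β, N (some b)) where
  toFun f := (f none, fun b => f (some b))
  invFun p j := Option.rec p.1 p.2 j
  map_add' _ _ := rfl
  map_smul' _ _ := rfl
  left_inv f := by funext j; cases j <;> rfl
  right_inv p := rfl

/-- Splitting off one coordinate of a Pi type. -/
noncomputable def piSplit {ι : Type} [DecidableEq ι] (M : ι → Type) [∀ i, AddCommGroup (M i)]
    [∀ i, Module R (M i)] (i0 : ι) :
    (∀ i, M i) ≃ₗ[R] M i0 × (∀ i : {i // i ≠ i0}, M i.1) :=
  (LinearEquiv.piCongrLeft R M (Equiv.optionSubtypeNe i0)).symm.trans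
    (piOption (fun j => M (Equiv.optionSubtypeNe i0 j)))

noncomputable def kerFstEquiv : (LinearMap.ker (LinearMap.fst R W N)) ≃ₗ[R] N where
  toFun x := x.1.2
  invFun n := ⟨(0, n), rfl⟩
  map_add' _ _ := rfl
  map_smul' _ _ := rfl
  left_inv x := by
    ext
    · exact (x.2 : x.1.1 = 0).symm
    · rfl
  right_inv n := rfl

def prodSubsingletonLeft (Y : Type) [AddCommGroup Y] [Module R Y] [Subsingleton Y] :
    (Y × N) ≃ₗ[R] N where
  toFun p := p.2
  invFun n := (0, n)
  map_add' _ _ := rfl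
  map_smul' _ _ := rfl
  left_inv p := by ext; exacts [Subsingleton.elim _ _, rfl]
  right_inv n := rfl

def prodSubsingletonRight (Y : Type) [AddCommGroup Y] [Module R Y] [Subsingleton Y] :
    (P × Y) ≃ₗ[R] P where
  toFun p := p.1
  invFun n := (n, 0)
  map_add' _ _ := rfl
  map_smul' _ _ := rfl
  left_inv p := by ext; exacts [rfl, Subsingleton.elim _ _]
  right_inv n := rfl

/-- If `Z ≃ X₁ × X₂` and `p : Z → W` is such that the composite
`X₁ → Z → W` is bijective, then `X₂ ≃ ker p`. -/
noncomputable def lemB (h : (X₁ × X₂) ≃ₗ[R] Z) (p : Z →ₗ[R] W)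
    (hbij : Function.Bijective (p ∘ₗ (h : (X₁ × X₂) →ₗ[R] Z) ∘ₗ LinearMap.inl R X₁ X₂)) :
    X₂ ≃ₗ[R] LinearMap.ker p := by
  classical
  set U : Submodule R Z := LinearMap.range ((h : (X₁ × X₂) →ₗ[R] Z) ∘ₗ LinearMap.inl R X₁ X₂)
  set V : Submodule R Z := LinearMap.range ((h : (X₁ × X₂) →ₗ[R] Z) ∘ₗ LinearMap.inr R X₁ X₂)
  set K : Submodule R Z := LinearMap.ker p
  have hbij' : Function.Bijective (fun x : X₁ => p (h (x, 0))) := by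
    have : (fun x : X₁ => p (h (x, 0)))
        = ⇑(p ∘ₗ (h : (X₁ × X₂) →ₗ[R] Z) ∘ₗ LinearMap.inl R X₁ X₂) := by
      funext x; simp
    rw [this]; exact hbij
  have hUmem : ∀ z, z ∈ U ↔ ∃ x : X₁, h (x, 0) = z := by
    intro z
    simp [U, LinearMap.mem_range]
  have hVmem : ∀ z, z ∈ V ↔ ∃ y : X₂, h (0, y) = z := by
    intro z
    simp [V, LinearMap.mem_range]
  have hUV : IsCompl U V := by
    constructor
    · rw [disjoint_iff]
      ext z
      simp only [Submodule.mem_inf, Submodule.mem_bot, hUmem, hVmem]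
      constructor
      · rintro ⟨⟨x, hx⟩, ⟨y, hy⟩⟩
        have : ((x, 0) : X₁ × X₂) = (0, y) := h.injective (hx.trans hy.symm)
        have hx0 : x = 0 := ((Prod.mk.injEq _ _ _ _).mp this).1
        rw [← hx, hx0]; simp
      · rintro rfl
        exact ⟨⟨0, by simp⟩, ⟨0, by simp⟩⟩
    · rw [codisjoint_iff, eq_top_iff]
      intro z _
      obtain ⟨⟨x, y⟩, hxy⟩ := h.surjective z
      have hz : z = h (x, 0) + h (0, y) := by
        rw [← map_add, ← hxy]
        norm_num
      rw [hz]
      exact Submodule.add_mem_sup ((hUmem _).mpr ⟨x, rfl⟩) ((hVmem _).mpr ⟨y, rfl⟩)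
  have hUK : IsCompl U K := by
    constructor
    · rw [disjoint_iff]
      ext z
      simp only [Submodule.mem_inf, Submodule.mem_bot, hUmem]
      constructor
      · rintro ⟨⟨x, hx⟩, hz⟩
        have hpz : p (h (x, 0)) = 0 := by rw [hx]; exact hz
        have hx0 : x = 0 := by
          have := hbij'.injective (a₁ := x) (a₂ := 0)
            (by show p (h (x, 0)) = p (h (0, 0)); rw [hpz, Prod.mk_zero_zero, map_zero, map_zero])
          exact this
        rw [← hx, hx0]; simp
      · rintro rfl
        exact ⟨⟨0, by simp⟩, by simp [K]⟩
    · rw [codisjoint_iff, eq_top_iff]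
      intro z _
      obtain ⟨x, hx⟩ := hbij'.surjective (p z)
      have hmem : z - h (x, 0) ∈ K := by
        simp only [K, LinearMap.mem_ker, map_sub, hx, sub_self]
      have hz : z = h (x, 0) + (z - h (x, 0)) := by abel
      rw [hz]
      exact Submodule.add_mem_sup ((hUmem _).mpr ⟨x, rfl⟩) hmem
  have e1 : X₂ ≃ₗ[R] V := by
    refine LinearEquiv.ofInjective ((h : (X₁ × X₂) →ₗ[R] Z) ∘ₗ LinearMap.inr R X₁ X₂) ?_
    intro x y hxy
    simp only [LinearMap.coe_comp, Function.comp_apply, LinearMap.coe_inr,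
      LinearEquiv.coe_coe] at hxy
    exact ((Prod.mk.injEq _ _ _ _).mp (h.injective hxy)).2
  exact e1.trans <| ((Submodule.quotientEquivOfIsCompl U V hUV).symm.trans
    (Submodule.quotientEquivOfIsCompl U K hUK))

end Tools

section Exchange

variable {R : Type} [Ring R]

theorem not_isUnit_zero_end {P : Type} [AddCommGroup P] [Module R P] [Nontrivial P] :
    ¬ IsUnit (0 : Module.End R P) := by
  intro h
  obtain ⟨x, hx⟩ := exists_ne (0 : P)
  have hb := (Module.End.isUnit_iff _).mp h
  exact hx (hb.injective (by simp))

theorem exchange' {ι : Type} [Fintype ι] [DecidableEq ι]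
    (M : ι → Type) [∀ i, AddCommGroup (M i)] [∀ i, Module R (M i)]
    {Y P N : Type} [AddCommGroup Y] [Module R Y] [AddCommGroup P] [Module R P]
    [AddCommGroup N] [Module R N]
    [Nontrivial P] (hloc : Loc (Module.End R P))
    (e : (Y × ∀ i, M i) ≃ₗ[R] P × N) :
    (∃ Z : Submodule R Y, Nonempty (Y ≃ₗ[R] P × Z) ∧
       Nonempty ((Z × ∀ i, M i) ≃ₗ[R] N)) ∨
    (∃ i0 : ι, ∃ Z : Submodule R (M i0),
       Nonempty (M i0 ≃ₗ[R] P × Z) ∧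
       Nonempty (((Y × Z) × ∀ i : {i // i ≠ i0}, M i.1) ≃ₗ[R] N)) := by
  classical
  set W := Y × ∀ i, M i with hW
  set p : P →ₗ[R] W := (e.symm : (P × N) →ₗ[R] W) ∘ₗ LinearMap.inl R P N with hp
  set q : W →ₗ[R] P := LinearMap.fst R P N ∘ₗ (e : W →ₗ[R] (P × N)) with hq
  set cY : Module.End R P :=
    q ∘ₗ (LinearMap.inl R Y (∀ i, M i)) ∘ₗ (LinearMap.fst R Y (∀ i, M i)) ∘ₗ p with hcY
  set c : ι → Module.End R P := fun i =>
    q ∘ₗ (LinearMap.inr R Y (∀ i, M i)) ∘ₗ (LinearMap.single R M i)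
      ∘ₗ (LinearMap.proj i) ∘ₗ (LinearMap.snd R Y (∀ i, M i)) ∘ₗ p with hc
  have hsum : cY + (∑ i, c i) = 1 := by
    ext x
    have h1 : (cY + ∑ i, c i) x = cY x + ∑ i, (c i) x := by
      rw [LinearMap.add_apply, LinearMap.sum_apply]
    rw [h1]
    have h2 : ∀ i, (c i) x
        = q (LinearMap.inr R Y (∀ i, M i) (LinearMap.single R M i ((p x).2 i))) := fun i => rfl
    simp_rw [h2]
    rw [← map_sum, ← map_sum]
    have h3 : (∑ i, LinearMap.single R M i ((p x).2 i)) = (p x).2 := by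
      have h4 : ∀ i, LinearMap.single R M i ((p x).2 i) = Pi.single i ((p x).2 i) :=
        fun i => rfl
      simp_rw [h4]
      exact Finset.univ_sum_single (p x).2
    rw [h3]
    have h5 : cY x = q ((p x).1, 0) := rfl
    have h6 : q (LinearMap.inr R Y (∀ i, M i) (p x).2) = q (0, (p x).2) := rfl
    rw [h5, h6, ← map_add]
    have h7 : (((p x).1, 0) : W) + (0, (p x).2) = p x := by
      show ((p x).1 + 0, (0 : ∀ i, M i) + (p x).2) = p x
      rw [add_zero, zero_add]
    rw [h7]
    show (LinearMap.fst R P N) (e (e.symm (x, 0))) = x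
    rw [e.apply_symm_apply]
    rfl
  have hunit : IsUnit (cY + ∑ i, c i) := by rw [hsum]; exact isUnit_one
  rcases hloc _ _ hunit with hY | hS
  · -- the unit is in the Y component
    left
    set u := hY.unit with hu'
    set a : P →ₗ[R] Y := (LinearMap.fst R Y (∀ i, M i)) ∘ₗ p with ha
    set b : Y →ₗ[R] P :=
      (↑u⁻¹ : Module.End R P) ∘ₗ q ∘ₗ LinearMap.inl R Y (∀ i, M i) with hb
    have hba : b ∘ₗ a = LinearMap.id := by
      have h1 : b ∘ₗ a = (↑u⁻¹ : Module.End R P) * cY := rfl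
      rw [h1, ← hY.unit_spec, ← hu', u.inv_mul]
      rfl
    set Z := LinearMap.ker b with hZ
    set splitY : Y ≃ₗ[R] P × Z := splitEquiv a b hba with hsplitY
    set h : (P × (Z × ∀ i, M i)) ≃ₗ[R] P × N :=
      (LinearEquiv.prodAssoc R P Z (∀ i, M i)).symm.trans
        ((splitY.symm.prodCongr (LinearEquiv.refl R (∀ i, M i))).trans e) with hh
    have key : ∀ x : P,
        (LinearMap.fst R P N) (h (x, (0 : Z × ∀ i, M i))) = (↑u : Module.End R P) x := by
      intro x
      have e1 : h (x, (0 : Z × ∀ i, M i)) = e (splitY.symm (x, (0 : Z)), 0) := rfl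
      have e2 : splitY.symm (x, (0 : Z)) = a x := by
        show a x + ((0 : Z) : Y) = a x
        simp
      have h3 : (↑u : Module.End R P) = cY := hY.unit_spec
      rw [e1, e2, h3]
      rfl
    have hbij : Function.Bijective
        ((LinearMap.fst R P N) ∘ₗ (h : (P × (Z × ∀ i, M i)) →ₗ[R] P × N)
          ∘ₗ LinearMap.inl R P (Z × ∀ i, M i)) := by
      have heq : ⇑((LinearMap.fst R P N) ∘ₗ (h : (P × (Z × ∀ i, M i)) →ₗ[R] P × N)
          ∘ₗ LinearMap.inl R P (Z × ∀ i, M i)) = ⇑(↑u : Module.End R P) := by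
        funext x
        simpa using key x
      rw [heq]
      exact (Module.End.isUnit_iff _).mp hY
    exact ⟨Z, ⟨splitY⟩, ⟨(lemB h (LinearMap.fst R P N) hbij).trans kerFstEquiv⟩⟩
  · -- the unit is in one of the M i components
    right
    obtain ⟨i0, -, hu⟩ := isUnit_of_sum hloc not_isUnit_zero_end Finset.univ c hS
    set u := hu.unit with hu'
    set a : P →ₗ[R] M i0 :=
      (LinearMap.proj i0) ∘ₗ (LinearMap.snd R Y (∀ i, M i)) ∘ₗ p with ha
    set b : M i0 →ₗ[R] P :=
      (↑u⁻¹ : Module.End R P) ∘ₗ q ∘ₗ (LinearMap.inr R Y (∀ i, M i))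
        ∘ₗ LinearMap.single R M i0 with hb
    have hba : b ∘ₗ a = LinearMap.id := by
      have h1 : b ∘ₗ a = (↑u⁻¹ : Module.End R P) * (c i0) := rfl
      rw [h1, ← hu.unit_spec, ← hu', u.inv_mul]
      rfl
    set Z := LinearMap.ker b with hZ
    set split0 : M i0 ≃ₗ[R] P × Z := splitEquiv a b hba with hsplit0
    set Pi' := ∀ i : {i // i ≠ i0}, M i.1 with hPi'
    have hsymm : ∀ v : M i0,
        (piSplit (R := R) M i0).symm ((v, 0) : M i0 × Pi') = LinearMap.single R M i0 v := by
      intro v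
      rw [LinearEquiv.symm_apply_eq]
      have h1 : piSplit (R := R) M i0 (LinearMap.single R M i0 v)
          = ((LinearMap.single R M i0 v) i0,
             fun b : {i // i ≠ i0} => (LinearMap.single R M i0 v) b.1) := rfl
      rw [h1]
      have h0 : ∀ j : {i // i ≠ i0}, (LinearMap.single R M i0 v) j.1 = 0 := by
        intro j
        have : (Pi.single i0 v : ∀ i, M i) j.1 = 0 := Pi.single_eq_of_ne j.2 v
        simpa using this
      ext
      · show v = (LinearMap.single R M i0 v) i0
        simp
      · rename_i j
        show (0 : Pi') j = (LinearMap.single R M i0 v) j.1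
        rw [h0 j]
        rfl
    set shuffle : (P × ((Y × Z) × Pi')) ≃ₗ[R] Y × (P × (Z × Pi')) :=
      { toFun := fun w => (w.2.1.1, (w.1, (w.2.1.2, w.2.2)))
        invFun := fun v => (v.2.1, ((v.1, v.2.2.1), v.2.2.2))
        map_add' := fun _ _ => rfl
        map_smul' := fun _ _ => rfl
        left_inv := fun _ => rfl
        right_inv := fun _ => rfl } with hshuffle
    set s2 : (P × (Z × Pi')) ≃ₗ[R] (∀ i, M i) :=
      (LinearEquiv.prodAssoc R P Z Pi').symm.trans
        ((split0.symm.prodCongr (LinearEquiv.refl R Pi')).trans (piSplit M i0).symm) with hs2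
    set h : (P × ((Y × Z) × Pi')) ≃ₗ[R] P × N :=
      shuffle.trans (((LinearEquiv.refl R Y).prodCongr s2).trans e) with hh
    have key : ∀ x : P,
        (LinearMap.fst R P N) (h (x, (0 : (Y × Z) × Pi'))) = (↑u : Module.End R P) x := by
      intro x
      have e1 : h (x, (0 : (Y × Z) × Pi')) = e (0, s2 (x, (0 : Z × Pi'))) := rfl
      have e2 : split0.symm (x, (0 : Z)) = a x := by
        show a x + ((0 : Z) : M i0) = a x
        simp
      have e3 : s2 (x, (0 : Z × Pi'))
          = (piSplit (R := R) M i0).symm ((a x, 0) : M i0 × Pi') := by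
        show (piSplit (R := R) M i0).symm ((split0.symm (x, (0 : Z)), 0) : M i0 × Pi') = _
        rw [e2]
      have h4 : (↑u : Module.End R P) = c i0 := hu.unit_spec
      rw [e1, e3, hsymm, h4]
      rfl
    have hbij : Function.Bijective
        ((LinearMap.fst R P N) ∘ₗ (h : (P × ((Y × Z) × Pi')) →ₗ[R] P × N)
          ∘ₗ LinearMap.inl R P ((Y × Z) × Pi')) := by
      have heq : ⇑((LinearMap.fst R P N) ∘ₗ (h : (P × ((Y × Z) × Pi')) →ₗ[R] P × N)
          ∘ₗ LinearMap.inl R P ((Y × Z) × Pi')) = ⇑(↑u : Module.End R P) := by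
        funext x
        simpa using key x
      rw [heq]
      exact (Module.End.isUnit_iff _).mp hu
    exact ⟨i0, Z, ⟨split0⟩, ⟨(lemB h (LinearMap.fst R P N) hbij).trans kerFstEquiv⟩⟩

end Exchange

section KS

variable {R : Type} [Ring R]

theorem nontrivial_pi {ι : Type} (M : ι → Type) [∀ i, AddCommGroup (M i)]
    (i : ι) (h : Nontrivial (M i)) : Nontrivial (∀ i, M i) := by
  classical
  obtain ⟨x, hx⟩ := exists_ne (0 : M i)
  refine ⟨Pi.single i x, 0, fun hc => hx ?_⟩
  have := congrFun hc i
  simpa using this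

theorem nontrivial_prod_left' {A B : Type} [AddCommGroup A] [AddCommGroup B]
    (h : Nontrivial A) : Nontrivial (A × B) := by
  obtain ⟨x, hx⟩ := exists_ne (0 : A)
  exact ⟨(x, 0), 0, fun hc => hx (by simpa using congrArg Prod.fst hc)⟩

theorem nontrivial_prod_right' {A B : Type} [AddCommGroup A] [AddCommGroup B]
    (h : Nontrivial B) : Nontrivial (A × B) := by
  obtain ⟨x, hx⟩ := exists_ne (0 : B)
  exact ⟨(0, x), 0, fun hc => hx (by simpa using congrArg Prod.snd hc)⟩

theorem card_compl {ι : Type} [Fintype ι] [DecidableEq ι] (i0 : ι) :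
    Fintype.card {i : ι // i ≠ i0} = Fintype.card ι - 1 := by
  have h1 : Fintype.card {i : ι // i = i0} = 1 := Fintype.card_subtype_eq i0
  have h2 := Fintype.card_subtype_compl (fun i : ι => i = i0)
  rw [h1] at h2
  exact h2

theorem countC (m : ℕ) :
    ∀ (ι κ : Type) [Fintype ι] [Fintype κ]
    (Y : Type) [AddCommGroup Y] [Module R Y]
    (M : ι → Type) [∀ i, AddCommGroup (M i)] [∀ i, Module R (M i)]
    (P : κ → Type) [∀ j, AddCommGroup (P j)] [∀ j, Module R (P j)],
    Fintype.card κ = m → (∀ i, Nontrivial (M i)) →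
    (∀ j, Nontrivial (P j)) → (∀ j, Loc (Module.End R (P j))) →
    ((Y × ∀ i, M i) ≃ₗ[R] (∀ j, P j)) →
    (Fintype.card ι ≤ m ∧ (Nontrivial Y → Fintype.card ι + 1 ≤ m)) := by
  induction m with
  | zero =>
    intro ι κ _ _ Y _ _ M _ _ P _ _ hκ hM hP hloc e
    have hk : IsEmpty κ := Fintype.card_eq_zero_iff.mp hκ
    have hsub : Subsingleton (∀ j, P j) := ⟨fun f g => funext fun j => (hk.false j).elim⟩
    constructor
    · by_contra hι
      have hpos : 0 < Fintype.card ι := by omega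
      obtain ⟨i⟩ := Fintype.card_pos_iff.mp hpos
      have hnt : Nontrivial (Y × ∀ i, M i) :=
        nontrivial_prod_right' (nontrivial_pi M i (hM i))
      obtain ⟨x, y, hxy⟩ := hnt
      exact hxy (e.injective (Subsingleton.elim _ _))
    · intro hY
      exfalso
      have hnt : Nontrivial (Y × ∀ i, M i) := nontrivial_prod_left' hY
      obtain ⟨x, y, hxy⟩ := hnt
      exact hxy (e.injective (Subsingleton.elim _ _))
  | succ m ih =>
    intro ι κ _ _ Y _ _ M _ _ P _ _ hκ hM hP hloc e
    classical
    have hpos : 0 < Fintype.card κ := by omega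
    obtain ⟨μ0⟩ := Fintype.card_pos_iff.mp hpos
    have hnt : Nontrivial (P μ0) := hP μ0
    have hcards : Fintype.card {j : κ // j ≠ μ0} = m := by rw [card_compl]; omega
    rcases exchange' M (hloc μ0) (e.trans (piSplit P μ0)) with
      ⟨Z, ⟨isoY⟩, ⟨iso2⟩⟩ | ⟨i0, Z, ⟨iso1⟩, ⟨iso2⟩⟩
    · have := ih ι {j // j ≠ μ0} Z M (fun j => P j.1)
        hcards hM (fun j => hP j.1) (fun j => hloc j.1) iso2
      exact ⟨by omega, fun _ => by omega⟩
    · have := ih {i // i ≠ i0} {j // j ≠ μ0} (Y × Z) (fun i => M i.1) (fun j => P j.1)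
        hcards (fun i => hM i.1) (fun j => hP j.1) (fun j => hloc j.1) iso2
      have hcι : 0 < Fintype.card ι := Fintype.card_pos_iff.mpr ⟨i0⟩
      have hcc := card_compl (ι := ι) i0
      refine ⟨by omega, fun hY => ?_⟩
      have := this.2 (nontrivial_prod_left' hY)
      omega

theorem KSmain (n : ℕ) :
    ∀ (ι κ : Type) [Fintype ι] [Fintype κ]
    (M : ι → Type) [∀ i, AddCommGroup (M i)] [∀ i, Module R (M i)]
    (P : κ → Type) [∀ j, AddCommGroup (P j)] [∀ j, Module R (P j)],
    Fintype.card ι = n → Fintype.card κ = n → (∀ i, Nontrivial (M i)) →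
    (∀ j, Nontrivial (P j)) → (∀ j, Loc (Module.End R (P j))) →
    ((∀ i, M i) ≃ₗ[R] (∀ j, P j)) →
    ∃ σ : ι ≃ κ, ∀ i, Nonempty (M i ≃ₗ[R] P (σ i)) := by
  induction n with
  | zero =>
    intro ι κ _ _ M _ _ P _ _ hι hκ hM hP hloc e
    have hιe : IsEmpty ι := Fintype.card_eq_zero_iff.mp hι
    exact ⟨Fintype.equivOfCardEq (by rw [hι, hκ]), fun i => (hιe.false i).elim⟩
  | succ n ih =>
    intro ι κ _ _ M _ _ P _ _ hι hκ hM hP hloc e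
    classical
    have hpos : 0 < Fintype.card κ := by omega
    obtain ⟨μ0⟩ := Fintype.card_pos_iff.mp hpos
    have hnt : Nontrivial (P μ0) := hP μ0
    have hcards : Fintype.card {j : κ // j ≠ μ0} = n := by rw [card_compl]; omega
    have e' : (PUnit × ∀ i, M i) ≃ₗ[R] P μ0 × (∀ j : {j // j ≠ μ0}, P j.1) :=
      (prodSubsingletonLeft PUnit).trans (e.trans (piSplit P μ0))
    rcases exchange' M (hloc μ0) e' with ⟨Z, ⟨isoY⟩, -⟩ | ⟨i0, Z, ⟨iso1⟩, ⟨iso2⟩⟩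
    · exfalso
      obtain ⟨x, y, hxy⟩ := hnt
      apply hxy
      have h1 : isoY.symm (x, (0 : Z)) = isoY.symm (y, (0 : Z)) := Subsingleton.elim _ _
      have h2 : ((x, (0 : Z)) : P μ0 × Z) = (y, (0 : Z)) := isoY.symm.injective h1
      exact congrArg Prod.fst h2
    · have hcardsι : Fintype.card {i : ι // i ≠ i0} = n := by rw [card_compl]; omega
      have iso2' : (Z × ∀ i : {i // i ≠ i0}, M i.1) ≃ₗ[R] (∀ j : {j // j ≠ μ0}, P j.1) :=
        (((prodSubsingletonLeft (R := R) (N := Z) PUnit).symm).prodCongr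
          (LinearEquiv.refl R (∀ i : {i // i ≠ i0}, M i.1))).trans iso2
      have hZ : Subsingleton Z := by
        by_contra hc
        rw [not_subsingleton_iff_nontrivial] at hc
        have := (countC n {i // i ≠ i0} {j // j ≠ μ0} Z (fun i => M i.1) (fun j => P j.1)
          hcards (fun i => hM i.1) (fun j => hP j.1) (fun j => hloc j.1) iso2').2 hc
        omega
      have isoMi0 : M i0 ≃ₗ[R] P μ0 := iso1.trans (prodSubsingletonRight Z)
      have e2 : (∀ i : {i // i ≠ i0}, M i.1) ≃ₗ[R] (∀ j : {j // j ≠ μ0}, P j.1) :=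
        (prodSubsingletonLeft Z).symm.trans iso2'
      obtain ⟨σ', hσ'⟩ := ih {i // i ≠ i0} {j // j ≠ μ0} (fun i => M i.1) (fun j => P j.1)
        hcardsι hcards (fun i => hM i.1) (fun j => hP j.1) (fun j => hloc j.1) e2
      refine ⟨(Equiv.optionSubtypeNe i0).symm.trans
        ((Equiv.optionCongr σ').trans (Equiv.optionSubtypeNe μ0)), fun i => ?_⟩
      by_cases hi : i = i0
      · subst hi
        have hval : ((Equiv.optionSubtypeNe i).symm.trans
            ((Equiv.optionCongr σ').trans (Equiv.optionSubtypeNe μ0))) i = μ0 := by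
          simp [Equiv.optionSubtypeNe_symm_self]
        rw [hval]
        exact ⟨isoMi0⟩
      · have hval : ((Equiv.optionSubtypeNe i0).symm.trans
            ((Equiv.optionCongr σ').trans (Equiv.optionSubtypeNe μ0))) i
            = (σ' ⟨i, hi⟩).1 := by
          simp [Equiv.optionSubtypeNe_symm_of_ne hi]
        rw [hval]
        exact hσ' ⟨i, hi⟩

end KS


section Apply

variable {A : Type} [Ring A]

theorem End_smul_eq_comp {X T : Type} [AddCommGroup X] [Module A X]
    [AddCommGroup T] [Module A T]
    (b : Module.End A T) (f : X →ₗ[A] T) : b • f = b ∘ₗ f := rfl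

/-- `Hom_A(⊕ X_l, T) ≃ ⊕ Hom_A(X_l, T)` as `End_A(T)`-modules. -/
noncomputable def homPiEquiv {Λ : Type} [Fintype Λ] [DecidableEq Λ]
    (X : Λ → Type) [∀ l, AddCommGroup (X l)] [∀ l, Module A (X l)]
    (T : Type) [AddCommGroup T] [Module A T] :
    ((∀ l, X l) →ₗ[A] T) ≃ₗ[Module.End A T] (∀ l, (X l →ₗ[A] T)) where
  toFun F := fun l => F ∘ₗ LinearMap.single A X l
  invFun G := ∑ l, (G l) ∘ₗ LinearMap.proj l
  map_add' F G := by
    funext l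
    ext x
    rfl
  map_smul' b F := by
    funext l
    ext x
    rfl
  left_inv F := by
    refine LinearMap.ext fun x => ?_
    rw [LinearMap.sum_apply]
    have h1 : ∀ l, ((F ∘ₗ LinearMap.single A X l) ∘ₗ LinearMap.proj l) x
        = F (Pi.single l (x l)) := fun l => rfl
    simp_rw [h1]
    rw [← map_sum F (fun l => (Pi.single l (x l) : ∀ i, X i)) Finset.univ,
      Finset.univ_sum_single]
  right_inv G := by
    funext l
    refine LinearMap.ext fun v => ?_
    have h1 : ((∑ m, (G m) ∘ₗ LinearMap.proj m) ∘ₗ LinearMap.single A X l) v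
        = ∑ m, G m ((Pi.single l v : ∀ i, X i) m) := by
      rw [LinearMap.comp_apply, LinearMap.sum_apply]
      rfl
    rw [h1]
    rw [Finset.sum_eq_single l]
    · simp
    · intro m _ hml
      rw [Pi.single_eq_of_ne hml, map_zero]
    · intro h
      exact absurd (Finset.mem_univ l) h

/-- Locality of `End_B(Hom_A(Θ_lam, T))` via the anti-isomorphism with
`End_A(Θ_lam)` given by precomposition. -/
theorem loc_end_hom {Λ : Type} [Fintype Λ] [DecidableEq Λ]
    (Θ : Λ → Type) [∀ l, AddCommGroup (Θ l)] [∀ l, Module A (Θ l)] (lam : Λ)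
    (hloc : Loc (Module.End A (Θ lam))) :
    Loc (Module.End (Module.End A (∀ n, Θ n)) (Θ lam →ₗ[A] (∀ n, Θ n))) := by
  set T := ∀ n, Θ n with hT
  set B := Module.End A T with hB
  set Pl := Θ lam →ₗ[A] T with hPl
  set sg : Θ lam →ₗ[A] T := LinearMap.single A Θ lam with hsg
  set pr : T →ₗ[A] Θ lam := LinearMap.proj lam with hpr
  set Ψ : Module.End A (Θ lam) → Module.End B Pl := fun h =>
    { toFun := fun f => f ∘ₗ h
      map_add' := fun f g => LinearMap.add_comp _ _ _
      map_smul' := fun b f => rfl } with hΨ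
  have hΨapp : ∀ h f, Ψ h f = f ∘ₗ h := fun h f => rfl
  have hΨadd : ∀ h₁ h₂, Ψ (h₁ + h₂) = Ψ h₁ + Ψ h₂ := by
    intro h₁ h₂
    refine LinearMap.ext fun f => LinearMap.ext fun x => ?_
    show f ((h₁ + h₂) x) = (Ψ h₁ f + Ψ h₂ f) x
    rw [LinearMap.add_apply, LinearMap.add_apply]
    exact map_add f _ _
  have hΨmul : ∀ h₁ h₂, Ψ (h₁ * h₂) = Ψ h₂ * Ψ h₁ := by
    intro h₁ h₂
    refine LinearMap.ext fun f => LinearMap.ext fun x => ?_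
    rfl
  have hΨone : Ψ 1 = 1 := by
    refine LinearMap.ext fun f => LinearMap.ext fun x => ?_
    rfl
  have hΨinj : Function.Injective Ψ := by
    intro h₁ h₂ hh
    refine LinearMap.ext fun x => ?_
    have h1 : Ψ h₁ sg = Ψ h₂ sg := by rw [hh]
    have h2 : sg (h₁ x) = sg (h₂ x) := LinearMap.congr_fun h1 x
    have h3 := congrFun h2 lam
    have h4 : ∀ y : Θ lam, sg y lam = y := by
      intro y
      show (LinearMap.single A Θ lam y) lam = y
      simp
    rwa [h4, h4] at h3
  have hΨsurj : Function.Surjective Ψ := by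
    intro φ
    refine ⟨pr ∘ₗ (φ sg), ?_⟩
    refine LinearMap.ext fun f => ?_
    have key : ((f ∘ₗ pr : Module.End A T) • sg : Pl) = f := by
      refine LinearMap.ext fun v => ?_
      show f (pr (sg v)) = f v
      have h5 : pr (sg v) = v := by
        show (LinearMap.single A Θ lam v) lam = v
        simp
      rw [h5]
    calc Ψ (pr ∘ₗ (φ sg)) f = (f ∘ₗ pr : Module.End A T) • (φ sg) := rfl
    _ = φ ((f ∘ₗ pr : Module.End A T) • sg) := (φ.map_smul _ _).symm
    _ = φ f := by rw [key]
  have hΨunit : ∀ h, IsUnit h ↔ IsUnit (Ψ h) := by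
    intro h
    constructor
    · rintro ⟨⟨a, b, hab, hba⟩, rfl⟩
      refine isUnit_iff_exists.mpr ⟨Ψ b, ?_, ?_⟩
      · rw [← hΨmul, hba, hΨone]
      · rw [← hΨmul, hab, hΨone]
    · intro hu
      obtain ⟨c, hc1, hc2⟩ := isUnit_iff_exists.mp hu
      obtain ⟨h', rfl⟩ := hΨsurj c
      refine isUnit_iff_exists.mpr ⟨h', ?_, ?_⟩
      · apply hΨinj
        rw [hΨmul, hΨone]
        exact hc2
      · apply hΨinj
        rw [hΨmul, hΨone]
        exact hc1
  intro a b hab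
  obtain ⟨ha', rfl⟩ := hΨsurj a
  obtain ⟨hb', rfl⟩ := hΨsurj b
  rw [← hΨadd] at hab
  rcases hloc _ _ ((hΨunit _).mpr hab) with h | h
  · exact Or.inl ((hΨunit _).mp h)
  · exact Or.inr ((hΨunit _).mp h)

theorem perm_eq_id {Λ : Type} [Fintype Λ] [PartialOrder Λ] (σ : Λ ≃ Λ)
    (hle : ∀ x, σ x ≤ x) : ∀ x, σ x = x := by
  intro x
  induction x using WellFoundedLT.induction with
  | ind x ih =>
    rcases eq_or_lt_of_le (hle x) with h | h
    · exact h
    · have h2 : σ (σ x) = σ x := ih (σ x) h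
      exact absurd (σ.injective h2) (ne_of_lt h)

end Apply
end KSp

/-- If `B = End_A(Θ)` is basic and `Hom_A(Q, Θ) ≅ Hom_A(Θ, Θ) = B` as left
`B`-modules (i.e. via an additive isomorphism commuting with postcomposition), where
`Q = ⊕ Q_λ` with `Q_λ` indecomposable covering `Θ_λ` and `Θ = ⊕ Θ_λ` with `Θ_λ`
pairwise non-isomorphic indecomposables, then `Hom_A(Q_λ, Θ) ≅ Hom_A(Θ_λ, Θ)` as
`B`-modules for every `λ`. -/
theorem hom_Q_iso_hom_Theta
    (k : Type) [Field k] (A : Type) [Ring A] [Algebra k A] [FiniteDimensional k A]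
    (Λ : Type) [Fintype Λ] [PartialOrder Λ]
    (Θ Q : Λ → Type)
    [∀ lam, AddCommGroup (Θ lam)] [∀ lam, Module A (Θ lam)]
    [∀ lam, AddCommGroup (Q lam)] [∀ lam, Module A (Q lam)]
    [∀ lam, Module.Finite A (Θ lam)] [∀ lam, Module.Finite A (Q lam)]
    (hΘind : ∀ lam, IsIndecomp A (Θ lam))
    (hQind : ∀ lam, IsIndecomp A (Q lam))
    (hΘdistinct : ∀ lam mu, lam ≠ mu → IsEmpty ((Θ lam) ≃ₗ[A] (Θ mu)))
    (π : ∀ lam, Q lam →ₗ[A] Θ lam)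
    (hπsurj : ∀ lam, Function.Surjective (π lam))
    (hhom : ∀ nu mu : Λ, ¬ nu ≤ mu → ∀ f : Θ nu →ₗ[A] Θ mu, f = 0)
    -- `B` is basic: the projective `B`-modules `Hom_A(Θ_λ, Θ)` are pairwise
    -- non-isomorphic
    (hbasic : ∀ lam mu : Λ, lam ≠ mu →
      ¬ ∃ e : ((Θ lam) →ₗ[A] (Π nu, Θ nu)) ≃+ ((Θ mu) →ₗ[A] (Π nu, Θ nu)),
        ∀ (b : (Π nu, Θ nu) →ₗ[A] (Π nu, Θ nu)) (f : (Θ lam) →ₗ[A] (Π nu, Θ nu)),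
          e (b.comp f) = b.comp (e f))
    -- `Hom_A(Q, Θ) ≅ Hom_A(Θ, Θ)` as left `B`-modules
    (hiso : ∃ e : ((Π nu, Q nu) →ₗ[A] (Π nu, Θ nu)) ≃+
        ((Π nu, Θ nu) →ₗ[A] (Π nu, Θ nu)),
      ∀ (b : (Π nu, Θ nu) →ₗ[A] (Π nu, Θ nu))
        (f : (Π nu, Q nu) →ₗ[A] (Π nu, Θ nu)),
        e (b.comp f) = b.comp (e f)) :
    ∀ lam : Λ,
      ∃ e : ((Q lam) →ₗ[A] (Π nu, Θ nu)) ≃+ ((Θ lam) →ₗ[A] (Π nu, Θ nu)),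
        ∀ (b : (Π nu, Θ nu) →ₗ[A] (Π nu, Θ nu)) (f : (Q lam) →ₗ[A] (Π nu, Θ nu)),
          e (b.comp f) = b.comp (e f) := by
    classical
  haveI hNkA : IsNoetherian k A := inferInstance
  haveI hAkA : IsArtinian k A := inferInstance
  haveI : IsNoetherianRing A := isNoetherian_of_tower k hNkA
  haveI : IsArtinianRing A := isArtinian_of_tower k hAkA
  have hLocTheta : ∀ lam, KSp.Loc (Module.End A (Θ lam)) := fun lam =>
    KSp.loc_end_of_indecomp (hΘind lam)
  have hLocP : ∀ lam,
      KSp.Loc (Module.End (Module.End A (∀ nu, Θ nu)) (Θ lam →ₗ[A] (∀ nu, Θ nu))) :=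
    fun lam => KSp.loc_end_hom Θ lam (hLocTheta lam)
  have hΘnt : ∀ lam, Nontrivial (Θ lam) := by
    intro lam
    by_contra hc
    rw [not_nontrivial_iff_subsingleton] at hc
    refine (hΘind lam).1 ?_
    ext x
    simp only [Submodule.mem_bot, Submodule.mem_top, iff_true]
    exact Subsingleton.elim x 0
  have hPnt : ∀ lam, Nontrivial ((Θ lam) →ₗ[A] (∀ nu, Θ nu)) := by
    intro lam
    obtain ⟨y, hy⟩ := exists_ne (0 : Θ lam)
    refine ⟨LinearMap.single A Θ lam, 0, fun hc => hy ?_⟩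
    have h1 := LinearMap.congr_fun hc y
    have h2 := congrFun h1 lam
    simpa using h2
  have hMnt : ∀ lam, Nontrivial ((Q lam) →ₗ[A] (∀ nu, Θ nu)) := by
    intro lam
    obtain ⟨y, hy⟩ := exists_ne (0 : Θ lam)
    obtain ⟨x, hx⟩ := hπsurj lam y
    refine ⟨(LinearMap.single A Θ lam) ∘ₗ (π lam), 0, fun hc => hy ?_⟩
    have h1 := LinearMap.congr_fun hc x
    have h2 := congrFun h1 lam
    rw [← hx]
    simpa using h2
  obtain ⟨e0, he0⟩ := hiso
  have emid : ((∀ nu, Q nu) →ₗ[A] (∀ nu, Θ nu))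
      ≃ₗ[Module.End A (∀ nu, Θ nu)] ((∀ nu, Θ nu) →ₗ[A] (∀ nu, Θ nu)) :=
    { toFun := e0
      map_add' := e0.map_add
      map_smul' := fun b f => he0 b f
      invFun := e0.symm
      left_inv := e0.symm_apply_apply
      right_inv := e0.apply_symm_apply }
  have Φ : (∀ l, (Q l →ₗ[A] (∀ nu, Θ nu)))
      ≃ₗ[Module.End A (∀ nu, Θ nu)] (∀ l, (Θ l →ₗ[A] (∀ nu, Θ nu))) :=
    (KSp.homPiEquiv Q (∀ nu, Θ nu)).symm.trans
      (emid.trans (KSp.homPiEquiv Θ (∀ nu, Θ nu)))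
  obtain ⟨σ, hσ⟩ := KSp.KSmain (R := Module.End A (∀ nu, Θ nu)) (Fintype.card Λ) Λ Λ
    (fun l => Q l →ₗ[A] (∀ nu, Θ nu)) (fun l => Θ l →ₗ[A] (∀ nu, Θ nu))
    rfl rfl hMnt hPnt hLocP Φ
  have hle : ∀ l, σ l ≤ l := by
    intro l
    by_contra hnle
    obtain ⟨E⟩ := hσ l
    obtain ⟨y, hy⟩ := exists_ne (0 : Θ l)
    obtain ⟨x, hx⟩ := hπsurj l y
    set f0 : Q l →ₗ[A] (∀ nu, Θ nu) := (LinearMap.single A Θ l) ∘ₗ (π l) with hf0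
    set el : Module.End A (∀ nu, Θ nu) :=
      (LinearMap.single A Θ l) ∘ₗ (LinearMap.proj l) with hel
    have hprs : ∀ v : Θ l,
        (LinearMap.proj l : (∀ nu, Θ nu) →ₗ[A] Θ l) ((LinearMap.single A Θ l) v) = v := by
      intro v
      simp
    have hef : el • f0 = f0 := by
      refine LinearMap.ext fun z => ?_
      show (LinearMap.single A Θ l)
        ((LinearMap.proj l : (∀ nu, Θ nu) →ₗ[A] Θ l) ((LinearMap.single A Θ l) (π l z)))
        = (LinearMap.single A Θ l) (π l z)
      rw [hprs]
    have hgel : el • (E f0) = E f0 := by rw [← E.map_smul, hef]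
    have hcomp : (LinearMap.proj l : (∀ nu, Θ nu) →ₗ[A] Θ l) ∘ₗ (E f0) = 0 :=
      hhom (σ l) l hnle _
    have hgeq : E f0 = 0 := by
      refine LinearMap.ext fun z => ?_
      have h1 : (E f0) z = el ((E f0) z) := (LinearMap.congr_fun hgel z).symm
      rw [h1]
      show (LinearMap.single A Θ l)
        ((LinearMap.proj l : (∀ nu, Θ nu) →ₗ[A] Θ l) ((E f0) z)) = 0
      have h2 : (LinearMap.proj l : (∀ nu, Θ nu) →ₗ[A] Θ l) ((E f0) z)
          = ((LinearMap.proj l : (∀ nu, Θ nu) →ₗ[A] Θ l) ∘ₗ (E f0)) z := rfl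
      rw [h2, hcomp]
      simp
    have hf00 : f0 = 0 := by
      apply E.injective
      rw [hgeq, map_zero]
    apply hy
    have h1 := LinearMap.congr_fun hf00 x
    have h2 := congrFun h1 l
    have h3 : f0 x l = π l x := by
      show (LinearMap.single A Θ l) ((π l) x) l = (π l) x
      simp
    rw [← hx, ← h3]
    simpa using h2
  have hσid : ∀ l, σ l = l := KSp.perm_eq_id σ hle
  intro lam
  obtain ⟨E⟩ := hσ lam
  rw [hσid lam] at E
  exact ⟨E.toAddEquiv, fun b f => E.map_smul b f⟩
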